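/- Let (D_λ)_{λ∈Λ} be a family of integral domains, let T be a subring of R = ∏_{λ∈Λ} D_λ with the property that there exists c ∈ T such that c_λ is a nonzero nonunit of D_λ for every λ ∈ Λ, and let U be an ultrafilter in B such that (U)^T is a maximal ideal of T. Then U contains an element of the form (V(a_λ))_{λ∈Λ} where a_λ ∈ D_λ \ {0} for all λ ∈ Λ. -/

import Mathlib

/-!
Common setup: `Λ` is an index set, `D λ` a family of commutative rings,
`R = ∏ λ, D λ` the product ring, and
`B = ∏ λ, P(max (D λ))` the product Boolean algebra of the power sets of the
sets of maximal ideals, realized as the Pi type `∀ l, Set (MaximalSpectrum (D l))`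
with its componentwise Boolean algebra structure (meet = componentwise ∩,
join = componentwise ∪, `⊥ = (∅)_λ`, complement componentwise, order = componentwise ⊆).
-/

variable {Λ : Type*} {D : Λ → Type*}

/-- `S(a) = (V(a_λ))_λ ∈ B`, where `V(x)` is the set of maximal ideals containing `x`. -/
def SFam [∀ l, CommRing (D l)] (a : ∀ l, D l) : ∀ l, Set (MaximalSpectrum (D l)) :=
  fun l => {P | a l ∈ P.asIdeal}

/-- `z(x) = {λ | x_λ = 0}`. -/
def ZFam [∀ l, CommRing (D l)] (x : ∀ l, D l) : Set Λ := {l | x l = 0}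

/-- A filter in a Boolean algebra: a nonempty subset not containing `⊥`, closed
under meets, and upward closed. -/
def IsBFilter {B : Type*} [BooleanAlgebra B] (U : Set B) : Prop :=
  U.Nonempty ∧ ⊥ ∉ U ∧ (∀ X ∈ U, ∀ Y ∈ U, X ⊓ Y ∈ U) ∧ (∀ Y ∈ U, ∀ Z, Y ≤ Z → Z ∈ U)

/-- An ultrafilter in a Boolean algebra: a filter containing `Y` or `Yᶜ` for every `Y`. -/
def IsBUltrafilter {B : Type*} [BooleanAlgebra B] (U : Set B) : Prop :=
  IsBFilter U ∧ ∀ Y, Y ∈ U ∨ Yᶜ ∈ U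

/-- Property (+): for all `r` and all nonzero `a` there is `d` lying in every maximal
ideal containing `a` but not `r`, and in no maximal ideal containing `r`. -/
def PropertyPlus (A : Type*) [CommRing A] : Prop :=
  ∀ r a : A, a ≠ 0 → ∃ d : A,
    (∀ M : Ideal A, M.IsMaximal → a ∈ M → r ∉ M → d ∈ M) ∧
    (∀ M : Ideal A, M.IsMaximal → r ∈ M → d ∉ M)

/-- Property (++): for every `r` there is `d` with `D(r) = V(d)`, i.e. the maximal
ideals containing `d` are exactly those not containing `r`. -/
def PropertyPlusPlus (A : Type*) [CommRing A] : Prop :=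
  ∀ r : A, ∃ d : A, ∀ P : MaximalSpectrum A, d ∈ P.asIdeal ↔ r ∉ P.asIdeal

/-- If the `D l` are integral domains, `T ⊆ R` is a subring containing an element `c`
all of whose components are nonzero nonunits, and `U` is an ultrafilter in `B` such
that `(U)^T` is a maximal ideal of `T`, then `U` contains an element of the form
`S a` with all components of `a` nonzero. -/
theorem stmt_6 [∀ l, CommRing (D l)] [∀ l, IsDomain (D l)]
    (T : Subring (∀ l, D l)) (c : ∀ l, D l) (hcT : c ∈ T)
    (hc : ∀ l, c l ≠ 0 ∧ ¬IsUnit (c l))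
    (U : Set (∀ l, Set (MaximalSpectrum (D l)))) (hU : IsBUltrafilter U)
    (I : Ideal T) (hI : ∀ a : T, a ∈ I ↔ SFam (a : ∀ l, D l) ∈ U)
    (hImax : I.IsMaximal) :
    ∃ a : ∀ l, D l, (∀ l, a l ≠ 0) ∧ SFam a ∈ U := by
  by_cases hcI : (⟨c, hcT⟩ : T) ∈ I
  · exact ⟨c, fun l => (hc l).1, (hI _).mp hcI⟩
  · obtain ⟨y, i, hiI, hyi⟩ := hImax.exists_inv hcI
    refine ⟨(i : ∀ l, D l), fun l hl => ?_, (hI i).mp hiI⟩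
    have h1 : (y : ∀ l, D l) l * c l + (i : ∀ l, D l) l = 1 := by
      have := congrArg (fun z : T => (z : ∀ l, D l) l) hyi
      simpa using this
    rw [hl, add_zero] at h1
    exact (hc l).2 (IsUnit.of_mul_eq_one _ (by rw [mul_comm]; exact h1))
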